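/- Let v : ℝ² → ℝ² have both components homogeneous quadratic forms (i.e. v(ω₁,ω₂) = (a₁ω₁²+b₁ω₁ω₂+c₁ω₂², a₂ω₁²+b₂ω₁ω₂+c₂ω₂²)), and let H be a positive definite quadratic form on ℝ² which is a first integral of ω̇ = v(ω), i.e. the derivative of H at ω applied to v(ω) vanishes for all ω ∈ ℝ². Then either v is identically zero, or the zero set {ω ∈ ℝ² : v(ω) = 0} is exactly a one-dimensional linear subspace of ℝ² (a single straight line of steady motions through the origin). -/

import Mathlib

/-- If both components of `v : ℝ² → ℝ²` are homogeneous quadratic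
forms and `H` is a positive definite quadratic form which is a first integral of
`ω̇ = v(ω)`, then either `v ≡ 0` or the zero set of `v` is exactly one
one-dimensional linear subspace of `ℝ²` (a single straight line of steady motions). -/
theorem suslov_slsm_dichotomy_dim_two
    (a₁ b₁ c₁ a₂ b₂ c₂ α β γ : ℝ)
    (v : ℝ × ℝ → ℝ × ℝ)
    (hv : ∀ ω : ℝ × ℝ,
      v ω = (a₁ * ω.1 ^ 2 + b₁ * ω.1 * ω.2 + c₁ * ω.2 ^ 2,
             a₂ * ω.1 ^ 2 + b₂ * ω.1 * ω.2 + c₂ * ω.2 ^ 2))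
    (H : ℝ × ℝ → ℝ)
    (hH : ∀ ω : ℝ × ℝ, H ω = α * ω.1 ^ 2 + β * ω.1 * ω.2 + γ * ω.2 ^ 2)
    (hpos : ∀ ω : ℝ × ℝ, ω ≠ 0 → 0 < H ω)
    (hint : ∀ ω : ℝ × ℝ, fderiv ℝ H ω (v ω) = 0) :
    (∀ ω, v ω = 0) ∨
      ∃ ℓ : Submodule ℝ (ℝ × ℝ), Module.finrank ℝ ℓ = 1 ∧
        {ω : ℝ × ℝ | v ω = 0} = (ℓ : Set (ℝ × ℝ)) := by
  -- rewrite H in a convenient form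
  have hHe : H = fun ω : ℝ × ℝ => α * (ω.1 * ω.1) + (β * (ω.1 * ω.2) + γ * (ω.2 * ω.2)) := by
    funext ω; rw [hH]; ring
  subst hHe
  -- positivity facts
  have hα : 0 < α := by
    have := hpos (1, 0) (by norm_num [Prod.ext_iff]); simpa using this
  have hγ : 0 < γ := by
    have := hpos (0, 1) (by norm_num [Prod.ext_iff]); simpa using this
  have hDpos : 0 < 4 * α * γ - β ^ 2 := by
    have h := hpos (-β, 2 * α) (by
      intro h
      rw [Prod.ext_iff] at h
      exact absurd h.2 (by norm_num; nlinarith))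
    simp only at h
    nlinarith
  have hα' : (2 * α) ≠ 0 := by positivity
  have hγ' : (2 * γ) ≠ 0 := by positivity
  have hD' : (4 * α * γ - β ^ 2) ≠ 0 := ne_of_gt hDpos
  -- the key cubic identity coming from the first integral condition
  have key : ∀ x y : ℝ,
      (2*α*x + β*y) * (a₁*x^2 + b₁*x*y + c₁*y^2)
        + (β*x + 2*γ*y) * (a₂*x^2 + b₂*x*y + c₂*y^2) = 0 := by
    intro x y
    have h1 : HasFDerivAt (fun ω : ℝ × ℝ => ω.1) (ContinuousLinearMap.fst ℝ ℝ ℝ) (x, y) :=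
      hasFDerivAt_fst
    have h2 : HasFDerivAt (fun ω : ℝ × ℝ => ω.2) (ContinuousLinearMap.snd ℝ ℝ ℝ) (x, y) :=
      hasFDerivAt_snd
    have hd : HasFDerivAt (fun ω : ℝ × ℝ => α * (ω.1 * ω.1) + (β * (ω.1 * ω.2) + γ * (ω.2 * ω.2)))
        _ (x, y) := ((h1.mul h1).const_mul α).add (((h1.mul h2).const_mul β).add
      ((h2.mul h2).const_mul γ))
    have h0 := hint (x, y)
    rw [hd.fderiv, hv (x, y)] at h0
    simp only [ContinuousLinearMap.add_apply, ContinuousLinearMap.smul_apply,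
      ContinuousLinearMap.coe_fst', ContinuousLinearMap.coe_snd', smul_eq_mul] at h0
    linear_combination h0
  -- coefficient identities
  have E1 : 2*α*a₁ + β*a₂ = 0 := by linear_combination key 1 0
  have E4 : β*c₁ + 2*γ*c₂ = 0 := by linear_combination key 0 1
  have E2 : 2*α*b₁ + β*a₁ + β*b₂ + 2*γ*a₂ = 0 := by
    linear_combination (key 1 1) / 2 - (key 1 (-1)) / 2 - key 0 1
  have E3 : 2*α*c₁ + β*b₁ + β*c₂ + 2*γ*b₂ = 0 := by
    linear_combination (key 1 1) / 2 + (key 1 (-1)) / 2 - key 1 0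
  -- the linear factor M(ω) = p ω₁ + q ω₂
  set p : ℝ := -a₂ / (2 * α) with hp
  set q : ℝ := c₁ / (2 * γ) with hq
  have r3 : a₂ = -(2*α) * p := by rw [hp]; field_simp
  have r4 : c₁ = 2*γ*q := by rw [hq]; field_simp
  have r1 : a₁ = β * p := by
    have : 2*α*a₁ = 2*α*(β*p) := by linear_combination E1 - β * r3
    exact mul_left_cancel₀ hα' this
  have r2 : c₂ = -(β * q) := by
    have : 2*γ*c₂ = 2*γ*(-(β*q)) := by linear_combination E4 - β * r4
    exact mul_left_cancel₀ hγ' this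
  have s1 : 2*α*b₁ + β*b₂ = (4*α*γ - β^2) * p := by
    linear_combination E2 - β * r1 - 2*γ*r3
  have s2 : β*b₁ + 2*γ*b₂ = -((4*α*γ - β^2) * q) := by
    linear_combination E3 - 2*α*r4 - β*r2
  have r5 : b₁ = β*q + 2*γ*p := by
    have h : (4*α*γ - β^2) * b₁ = (4*α*γ - β^2) * (β*q + 2*γ*p) := by
      linear_combination 2*γ*s1 - β*s2
    exact mul_left_cancel₀ hD' h
  have r6 : b₂ = -(2*α*q + β*p) := by
    have h : (4*α*γ - β^2) * b₂ = (4*α*γ - β^2) * (-(2*α*q + β*p)) := by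
      linear_combination 2*α*s2 - β*s1
    exact mul_left_cancel₀ hD' h
  -- the factorization of v
  have F : ∀ ω : ℝ × ℝ,
      v ω = ((p*ω.1 + q*ω.2) * (β*ω.1 + 2*γ*ω.2),
             -((p*ω.1 + q*ω.2) * (2*α*ω.1 + β*ω.2))) := by
    intro ω
    rw [hv ω, Prod.ext_iff]
    constructor
    · linear_combination ω.1^2 * r1 + ω.1*ω.2 * r5 + ω.2^2 * r4
    · linear_combination ω.1^2 * r3 + ω.1*ω.2 * r6 + ω.2^2 * r2
  -- zero set characterization
  have hzero : ∀ ω : ℝ × ℝ, v ω = 0 ↔ p*ω.1 + q*ω.2 = 0 := by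
    intro ω
    rw [F ω, Prod.ext_iff]
    simp only [Prod.fst_zero, Prod.snd_zero, neg_eq_zero]
    constructor
    · rintro ⟨h1, h2⟩
      by_contra hM
      have hL2 : β*ω.1 + 2*γ*ω.2 = 0 := by
        rcases mul_eq_zero.1 h1 with h | h
        · exact absurd h hM
        · exact h
      have hL1 : 2*α*ω.1 + β*ω.2 = 0 := by
        rcases mul_eq_zero.1 h2 with h | h
        · exact absurd h hM
        · exact h
      have hx : ω.1 = 0 := by
        have : (4*α*γ - β^2) * ω.1 = 0 := by linear_combination 2*γ*hL1 - β*hL2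
        exact (mul_eq_zero.1 this).resolve_left hD'
      have hy : ω.2 = 0 := by
        have : (4*α*γ - β^2) * ω.2 = 0 := by linear_combination 2*α*hL2 - β*hL1
        exact (mul_eq_zero.1 this).resolve_left hD'
      exact hM (by rw [hx, hy]; ring)
    · intro h
      constructor <;> rw [h] <;> ring
  -- dichotomy
  by_cases hpq : p = 0 ∧ q = 0
  · left
    intro ω
    rw [(hzero ω)]
    rw [hpq.1, hpq.2]; ring
  · right
    refine ⟨Submodule.span ℝ {((-q, p) : ℝ × ℝ)}, ?_, ?_⟩
    · apply finrank_span_singleton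
      intro h
      rw [Prod.ext_iff] at h
      simp only [Prod.fst_zero, Prod.snd_zero, neg_eq_zero] at h
      exact hpq ⟨h.2, h.1⟩
    · ext ω
      simp only [Set.mem_setOf_eq, SetLike.mem_coe, Submodule.mem_span_singleton, hzero ω]
      constructor
      · intro h
        rcases not_and_or.1 hpq with hp0 | hq0
        · refine ⟨ω.2 / p, ?_⟩
          rw [Prod.ext_iff]
          constructor
          · simp only [Prod.smul_fst, smul_eq_mul]
            field_simp
            linarith [h]
          · simp only [Prod.smul_snd, smul_eq_mul]
            field_simp
        · refine ⟨-ω.1 / q, ?_⟩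
          rw [Prod.ext_iff]
          constructor
          · simp only [Prod.smul_fst, smul_eq_mul]
            field_simp
          · simp only [Prod.smul_snd, smul_eq_mul]
            field_simp
            linarith [h]
      · rintro ⟨t, rfl⟩
        simp only [Prod.smul_fst, Prod.smul_snd, smul_eq_mul]
        ring
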